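/- Let X and Y be Polish spaces and c : X × Y → ℝ a continuous non-negative cost function. Let K be an optimal transport kernel for c, and let μ₁, μ₂ be probability measures on X such that γ₁ := μ₁ ⊙ K and γ₂ := μ₂ ⊙ K each have finite transport cost. Then γ₁ and γ₂ are c-CM compatible, i.e. supp(γ₁) ∪ supp(γ₂) is c-cyclically monotone. -/

import Mathlib

open MeasureTheory ProbabilityTheory Set
open scoped ENNReal

noncomputable section

/-- The transport cost of a plan `γ` for the cost function `c`. -/
def transportCost {X Y : Type*} [MeasurableSpace X] [MeasurableSpace Y]
    (c : X × Y → ℝ) (γ : Measure (X × Y)) : ℝ≥0∞ :=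
  ∫⁻ p, ENNReal.ofReal (c p) ∂γ

/-- `γ` is a coupling of `μ` and `ν`: its marginals are `μ` and `ν`. -/
def IsCoupling {X Y : Type*} [MeasurableSpace X] [MeasurableSpace Y]
    (γ : Measure (X × Y)) (μ : Measure X) (ν : Measure Y) : Prop :=
  γ.map Prod.fst = μ ∧ γ.map Prod.snd = ν

/-- `γ` is an optimal coupling of `μ` and `ν` for the cost `c`: it is a coupling and
attains the infimum of the transport cost over all couplings of `μ` and `ν`. -/
def IsOptimalCoupling {X Y : Type*} [MeasurableSpace X] [MeasurableSpace Y]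
    (c : X × Y → ℝ) (γ : Measure (X × Y)) (μ : Measure X) (ν : Measure Y) : Prop :=
  IsCoupling γ μ ν ∧
    ∀ γ' : Measure (X × Y), IsCoupling γ' μ ν → transportCost c γ ≤ transportCost c γ'


/-- A set `Γ ⊆ X × Y` is `c`-cyclically monotone: for any finite family of points of `Γ`
and any permutation `σ`, `∑ c(xᵢ,yᵢ) ≤ ∑ c(xᵢ, y_{σ(i)})`. -/
def IsCCM {X Y : Type*} (c : X × Y → ℝ) (Γ : Set (X × Y)) : Prop :=
  ∀ (N : ℕ) (σ : Equiv.Perm (Fin N)) (p : Fin N → X × Y),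
    (∀ i, p i ∈ Γ) → ∑ i, c (p i) ≤ ∑ i, c ((p i).1, (p (σ i)).2)

/-- The (topological) support of a measure: the set of points all of whose open
neighbourhoods have positive measure. -/
def mSupport {Z : Type*} [TopologicalSpace Z] [MeasurableSpace Z] (γ : Measure Z) :
    Set Z :=
  {z | ∀ U : Set Z, IsOpen U → z ∈ U → γ U ≠ 0}

/-- A Markov kernel `K` is an optimal transport kernel for the cost `c` if, for every
probability measure `μ`, whenever the product measure `μ ⊙ K = μ ⊗ₘ K` has finite
transport cost it is an optimal coupling between `μ` and `μK`. -/
def IsOptimalTransportKernel {X Y : Type*} [MeasurableSpace X] [MeasurableSpace Y]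
    (c : X × Y → ℝ) (K : Kernel X Y) : Prop :=
  ∀ μ : Measure X, IsProbabilityMeasure μ → transportCost c (μ ⊗ₘ K) < ⊤ →
    IsOptimalCoupling c (μ ⊗ₘ K) μ (μ.bind K)

private lemma map_finset_sum_meas {α β ι : Type*} [MeasurableSpace α] [MeasurableSpace β]
    (s : Finset ι) (μ : ι → Measure α) {f : α → β} (hf : Measurable f) :
    (∑ i ∈ s, μ i).map f = ∑ i ∈ s, (μ i).map f := by
  classical
  induction s using Finset.induction_on with
  | empty => simp [Measure.map_zero]
  | @insert _ _ h ih =>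
      rw [Finset.sum_insert h, Finset.sum_insert h, Measure.map_add _ _ hf, ih]

private lemma ofReal_sum_le {ι : Type*} (s : Finset ι) (g : ι → ℝ) :
    ENNReal.ofReal (∑ i ∈ s, g i) ≤ ∑ i ∈ s, ENNReal.ofReal (g i) := by
  classical
  induction s using Finset.induction_on with
  | empty => simp
  | @insert _ _ h ih =>
      rw [Finset.sum_insert h, Finset.sum_insert h]
      exact ENNReal.ofReal_add_le.trans (by gcongr)

/-- The support of an optimal coupling with finite cost (continuous nonneg cost) is
`c`-cyclically monotone. -/
theorem optimal_support_isCCM {X Y : Type*}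
    [MeasurableSpace X] [TopologicalSpace X] [BorelSpace X] [SecondCountableTopology X]
    [MeasurableSpace Y] [TopologicalSpace Y] [BorelSpace Y] [SecondCountableTopology Y]
    (c : X × Y → ℝ) (hc_cont : Continuous c) (hc_nonneg : ∀ p, 0 ≤ c p)
    (γ : Measure (X × Y)) [IsFiniteMeasure γ] {μ : Measure X} {ν : Measure Y}
    (hopt : IsOptimalCoupling c γ μ ν) (hfin : transportCost c γ < ⊤) :
    IsCCM c (mSupport γ) := by
  classical
  intro N σ p hp
  by_contra hcon
  push_neg at hcon
  obtain rfl | hN := Nat.eq_zero_or_pos N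
  · simp at hcon
  set S := ∑ i, c (p i) with hS
  set T := ∑ i, c ((p i).1, (p (σ i)).2) with hT
  have hT0 : 0 ≤ T := Finset.sum_nonneg fun i _ => hc_nonneg _
  set δ : ℝ := (S - T) / (2 * N + 1) with hδdef
  have hST : T < S := hcon
  have hδpos : 0 < δ := div_pos (sub_pos.2 hST) (by positivity)
  -- choose product neighbourhoods where c varies by less than δ
  have key : ∀ i j : Fin N, ∃ (U : Set X) (V : Set Y), IsOpen U ∧ IsOpen V ∧
      (p i).1 ∈ U ∧ (p j).2 ∈ V ∧
      ∀ x ∈ U, ∀ y ∈ V, |c (x, y) - c ((p i).1, (p j).2)| < δ := by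
    intro i j
    have hW : IsOpen (c ⁻¹' Metric.ball (c ((p i).1, (p j).2)) δ) :=
      Metric.isOpen_ball.preimage hc_cont
    have hmem : ((p i).1, (p j).2) ∈ c ⁻¹' Metric.ball (c ((p i).1, (p j).2)) δ := by
      simp [Metric.mem_ball, hδpos]
    obtain ⟨U, V, hU, hV, hxU, hyV, hUV⟩ := isOpen_prod_iff.mp hW _ _ hmem
    refine ⟨U, V, hU, hV, hxU, hyV, fun x hx y hy => ?_⟩
    have := hUV (mk_mem_prod hx hy)
    simpa [Real.dist_eq] using this
  choose U V hUo hVo hxU hyV hUV using key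
  set U' : Fin N → Set X := fun i => ⋂ j, U i j with hU'
  set V' : Fin N → Set Y := fun j => ⋂ i, V i j with hV'
  have hU'o : ∀ i, IsOpen (U' i) := fun i => isOpen_iInter_of_finite (hUo i)
  have hV'o : ∀ j, IsOpen (V' j) := fun j => isOpen_iInter_of_finite (fun i => hVo i j)
  set A : Fin N → Set (X × Y) := fun i => U' i ×ˢ V' i with hA
  have hAo : ∀ i, IsOpen (A i) := fun i => (hU'o i).prod (hV'o i)
  have hAm : ∀ i, MeasurableSet (A i) := fun i => (hAo i).measurableSet
  have hpA : ∀ i, p i ∈ A i := fun i =>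
    ⟨mem_iInter.2 fun j => hxU i j, mem_iInter.2 fun j => hyV j i⟩
  have hest : ∀ i j : Fin N, ∀ x ∈ U' i, ∀ y ∈ V' j,
      |c (x, y) - c ((p i).1, (p j).2)| < δ := fun i j x hx y hy =>
    hUV i j x (mem_iInter.1 hx j) y (mem_iInter.1 hy i)
  have hγA : ∀ i, γ (A i) ≠ 0 := fun i => hp i (A i) (hAo i) (hpA i)
  have hγAtop : ∀ i, γ (A i) ≠ ⊤ := fun i => measure_ne_top γ _
  haveI : Nonempty (Fin N) := Fin.pos_iff_nonempty.mp hN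
  obtain ⟨i₀, hi₀⟩ := Finite.exists_min fun i => γ (A i)
  set m := γ (A i₀) with hm
  have hm0 : m ≠ 0 := hγA i₀
  have hmtop : m ≠ ⊤ := hγAtop i₀
  have hnN0 : (N : ℝ≥0∞) ≠ 0 := by exact_mod_cast hN.ne'
  have hnNtop : (N : ℝ≥0∞) ≠ ⊤ := ENNReal.natCast_ne_top N
  set r : ℝ≥0∞ := m * (N : ℝ≥0∞)⁻¹ with hr
  have hr0 : r ≠ 0 := by
    simp [hr, hm0, ENNReal.inv_ne_zero.2 hnNtop]
  have hrtop : r ≠ ⊤ := by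
    refine ENNReal.mul_ne_top hmtop (ENNReal.inv_ne_top.2 hnN0)
  -- normalized restrictions
  set gh : Fin N → Measure (X × Y) := fun i => (γ (A i))⁻¹ • γ.restrict (A i) with hgh
  have ghuniv : ∀ i, gh i univ = 1 := by
    intro i
    simp [hgh, Measure.smul_apply, Measure.restrict_apply_univ,
      ENNReal.inv_mul_cancel (hγA i) (hγAtop i)]
  have ghcompl : ∀ i, gh i (A i)ᶜ = 0 := by
    intro i
    simp [hgh, Measure.smul_apply, Measure.restrict_apply (hAm i).compl]
  haveI ghprob : ∀ i, IsProbabilityMeasure (gh i) := fun i => ⟨ghuniv i⟩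
  set Fi : Fin N → Measure X := fun i => (gh i).map Prod.fst with hFi
  set Si : Fin N → Measure Y := fun i => (gh i).map Prod.snd with hSi
  haveI Fiprob : ∀ i, IsProbabilityMeasure (Fi i) := fun i => by
    haveI := ghprob i
    exact Measure.isProbabilityMeasure_map measurable_fst.aemeasurable
  haveI Siprob : ∀ i, IsProbabilityMeasure (Si i) := fun i => by
    haveI := ghprob i
    exact Measure.isProbabilityMeasure_map measurable_snd.aemeasurable
  set η : Measure (X × Y) := r • ∑ i, gh i with hη
  set ρ : Fin N → Measure (X × Y) := fun i => (Fi i).prod (Si (σ i)) with hρ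
  set ζ : Measure (X × Y) := r • ∑ i, ρ i with hζ
  -- η ≤ γ
  have hηγ : η ≤ γ := by
    refine Measure.le_iff.2 fun s hs => ?_
    have hterm : ∀ i : Fin N, r * ((γ (A i))⁻¹ * γ (s ∩ A i)) ≤ (N : ℝ≥0∞)⁻¹ * γ s := by
      intro i
      have h1 : r * (γ (A i))⁻¹ ≤ (N : ℝ≥0∞)⁻¹ := by
        calc r * (γ (A i))⁻¹ = m * (N : ℝ≥0∞)⁻¹ * (γ (A i))⁻¹ := by rw [hr]
          _ ≤ γ (A i) * (N : ℝ≥0∞)⁻¹ * (γ (A i))⁻¹ := by gcongr; exact hi₀ i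
          _ = (N : ℝ≥0∞)⁻¹ * (γ (A i) * (γ (A i))⁻¹) := by ring
          _ = (N : ℝ≥0∞)⁻¹ := by
              rw [ENNReal.mul_inv_cancel (hγA i) (hγAtop i), mul_one]
      calc r * ((γ (A i))⁻¹ * γ (s ∩ A i)) = (r * (γ (A i))⁻¹) * γ (s ∩ A i) := by ring
        _ ≤ (N : ℝ≥0∞)⁻¹ * γ s := by
            exact mul_le_mul' h1 (measure_mono inter_subset_left)
    calc η s = r * ∑ i, ((γ (A i))⁻¹ * γ (s ∩ A i)) := by
          simp [hη, Measure.smul_apply, Measure.finset_sum_apply, hgh,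
            Measure.restrict_apply hs]
      _ = ∑ i : Fin N, r * ((γ (A i))⁻¹ * γ (s ∩ A i)) := by rw [Finset.mul_sum]
      _ ≤ ∑ _i : Fin N, (N : ℝ≥0∞)⁻¹ * γ s := Finset.sum_le_sum fun i _ => hterm i
      _ = (N : ℝ≥0∞) * ((N : ℝ≥0∞)⁻¹ * γ s) := by
          rw [Finset.sum_const, Finset.card_univ, Fintype.card_fin]; simp [nsmul_eq_mul]
      _ = γ s := by
          rw [← mul_assoc, ENNReal.mul_inv_cancel hnN0 hnNtop, one_mul]
  haveI : IsFiniteMeasure η :=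
    ⟨lt_of_le_of_lt (Measure.le_iff'.1 hηγ univ) (measure_lt_top γ univ)⟩
  -- marginals of ζ and η coincide
  have hζfst : ζ.map Prod.fst = η.map Prod.fst := by
    rw [hζ, hη, Measure.map_smul, Measure.map_smul,
      map_finset_sum_meas _ _ measurable_fst, map_finset_sum_meas _ _ measurable_fst]
    congr 1
    refine Finset.sum_congr rfl fun i _ => ?_
    haveI := Siprob (σ i)
    rw [hρ]
    simp only
    rw [Measure.map_fst_prod, measure_univ, one_smul]
  have hζsnd : ζ.map Prod.snd = η.map Prod.snd := by
    rw [hζ, hη, Measure.map_smul, Measure.map_smul,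
      map_finset_sum_meas _ _ measurable_snd, map_finset_sum_meas _ _ measurable_snd]
    congr 1
    have : ∀ i, (ρ i).map Prod.snd = Si (σ i) := by
      intro i
      haveI := Fiprob i
      rw [hρ]
      simp only
      rw [Measure.map_snd_prod, measure_univ, one_smul]
    calc ∑ i, (ρ i).map Prod.snd = ∑ i, Si (σ i) := Finset.sum_congr rfl fun i _ => this i
      _ = ∑ i, Si i := Equiv.sum_comp σ Si
      _ = ∑ i, (gh i).map Prod.snd := rfl
  -- the competitor coupling
  set γ' : Measure (X × Y) := (γ - η) + ζ with hγ'
  have hsub : γ - η + η = γ := Measure.sub_add_cancel_of_le hηγ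
  have hfst' : γ'.map Prod.fst = μ := by
    have h1 : (γ - η).map Prod.fst + η.map Prod.fst = μ := by
      rw [← Measure.map_add _ _ measurable_fst, hsub, hopt.1.1]
    rw [hγ', Measure.map_add _ _ measurable_fst, hζfst, h1]
  have hsnd' : γ'.map Prod.snd = ν := by
    have h1 : (γ - η).map Prod.snd + η.map Prod.snd = ν := by
      rw [← Measure.map_add _ _ measurable_snd, hsub, hopt.1.2]
    rw [hγ', Measure.map_add _ _ measurable_snd, hζsnd, h1]
  -- cost estimates
  have hfmeas : Measurable fun z : X × Y => ENNReal.ofReal (c z) :=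
    hc_cont.measurable.ennreal_ofReal
  have hsplit : transportCost c γ = transportCost c (γ - η) + transportCost c η := by
    conv_lhs => rw [← hsub]
    exact lintegral_add_measure _ _ _
  have hghost : ∀ i, ENNReal.ofReal (c (p i) - δ) ≤ transportCost c (gh i) := by
    intro i
    have hres : ∀ z ∈ A i, ENNReal.ofReal (c (p i) - δ) ≤ ENNReal.ofReal (c z) := by
      intro z hz
      apply ENNReal.ofReal_le_ofReal
      have h2 : |c (z.1, z.2) - c ((p i).1, (p i).2)| < δ := hest i i z.1 hz.1 z.2 hz.2
      have h3 : |c z - c (p i)| < δ := by simpa using h2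
      linarith [(abs_lt.1 h3).1]
    calc ENNReal.ofReal (c (p i) - δ)
        = (γ (A i))⁻¹ * (ENNReal.ofReal (c (p i) - δ) * γ (A i)) := by
          rw [mul_comm (ENNReal.ofReal _), ← mul_assoc,
            ENNReal.inv_mul_cancel (hγA i) (hγAtop i), one_mul]
      _ ≤ (γ (A i))⁻¹ * ∫⁻ z in A i, ENNReal.ofReal (c z) ∂γ := by
          gcongr
          rw [← setLIntegral_const (A i) (ENNReal.ofReal (c (p i) - δ))]
          exact setLIntegral_mono hfmeas hres
      _ = transportCost c (gh i) := by
          simp [transportCost, hgh, lintegral_smul_measure]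
  have hηcost : r * ∑ i, ENNReal.ofReal (c (p i) - δ) ≤ transportCost c η := by
    have : transportCost c η = r * ∑ i, transportCost c (gh i) := by
      simp only [transportCost, hη, lintegral_smul_measure,
        lintegral_finset_sum_measure, smul_eq_mul]
    rw [this]
    gcongr with i
    exact hghost i
  have hρcost : ∀ i, transportCost c (ρ i) ≤
      ENNReal.ofReal (c ((p i).1, (p (σ i)).2) + δ) := by
    intro i
    haveI := Fiprob i
    haveI := Siprob (σ i)
    set B : Set (X × Y) := U' i ×ˢ V' (σ i) with hB
    have hBm : MeasurableSet B := ((hU'o i).prod (hV'o (σ i))).measurableSet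
    have hFic : Fi i (U' i)ᶜ = 0 := by
      rw [hFi]
      simp only
      rw [Measure.map_apply measurable_fst (hU'o i).measurableSet.compl]
      refine measure_mono_null (fun z hz => ?_) (ghcompl i)
      intro hzA
      exact hz hzA.1
    have hSic : Si (σ i) (V' (σ i))ᶜ = 0 := by
      rw [hSi]
      simp only
      rw [Measure.map_apply measurable_snd (hV'o (σ i)).measurableSet.compl]
      refine measure_mono_null (fun z hz => ?_) (ghcompl (σ i))
      intro hzA
      exact hz hzA.2
    have hconc : ρ i Bᶜ = 0 := by
      rw [hB, compl_prod_eq_union]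
      refine le_antisymm (le_trans (measure_union_le _ _) ?_) (by simp)
      rw [hρ]
      simp only
      rw [Measure.prod_prod, Measure.prod_prod, hFic, hSic]
      simp
    have hae : ∀ᵐ z ∂(ρ i), z ∈ B := by
      rw [ae_iff]
      exact hconc
    have hrest : (ρ i).restrict B = ρ i := Measure.restrict_eq_self_of_ae_mem hae
    have hbound : ∀ z ∈ B, ENNReal.ofReal (c z) ≤
        ENNReal.ofReal (c ((p i).1, (p (σ i)).2) + δ) := by
      intro z hz
      apply ENNReal.ofReal_le_ofReal
      have h2 : |c (z.1, z.2) - c ((p i).1, (p (σ i)).2)| < δ :=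
        hest i (σ i) z.1 hz.1 z.2 hz.2
      have h3 : |c z - c ((p i).1, (p (σ i)).2)| < δ := by simpa using h2
      linarith [(abs_lt.1 h3).2]
    have hρprob : IsProbabilityMeasure (ρ i) := by
      rw [hρ]; exact Measure.prod.instIsProbabilityMeasure _ _
    calc transportCost c (ρ i) = ∫⁻ z in B, ENNReal.ofReal (c z) ∂(ρ i) := by
          have h4 : transportCost c (ρ i) = transportCost c ((ρ i).restrict B) := by
            rw [hrest]
          rw [h4]; rfl
      _ ≤ ∫⁻ _z in B, ENNReal.ofReal (c ((p i).1, (p (σ i)).2) + δ) ∂(ρ i) :=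
          setLIntegral_mono measurable_const hbound
      _ = ENNReal.ofReal (c ((p i).1, (p (σ i)).2) + δ) * ρ i B := setLIntegral_const _ _
      _ ≤ ENNReal.ofReal (c ((p i).1, (p (σ i)).2) + δ) * 1 := by
          gcongr
          exact (measure_mono (subset_univ _)).trans_eq (hρprob.measure_univ)
      _ = ENNReal.ofReal (c ((p i).1, (p (σ i)).2) + δ) := mul_one _
  have hζcost : transportCost c ζ ≤
      r * ∑ i, ENNReal.ofReal (c ((p i).1, (p (σ i)).2) + δ) := by
    have : transportCost c ζ = r * ∑ i, transportCost c (ρ i) := by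
      simp only [transportCost, hζ, lintegral_smul_measure,
        lintegral_finset_sum_measure, smul_eq_mul]
    rw [this]
    gcongr with i
    exact hρcost i
  -- comparison of the two sums
  have harith : T + N * δ < S - N * δ := by
    have h1 : (2 * N + 1) * δ = S - T := by
      rw [hδdef]
      field_simp
    nlinarith [hδpos]
  have hsum_lt : ∑ i, ENNReal.ofReal (c ((p i).1, (p (σ i)).2) + δ) <
      ∑ i, ENNReal.ofReal (c (p i) - δ) := by
    have hL : ∑ i, ENNReal.ofReal (c ((p i).1, (p (σ i)).2) + δ)
        = ENNReal.ofReal (T + N * δ) := by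
      rw [← ENNReal.ofReal_sum_of_nonneg fun i _ => by
        have := hc_nonneg ((p i).1, (p (σ i)).2); linarith [hδpos.le]]
      congr 1
      rw [Finset.sum_add_distrib, Finset.sum_const, Finset.card_univ, Fintype.card_fin,
        nsmul_eq_mul, hT]
    have hR : ENNReal.ofReal (S - N * δ) ≤ ∑ i, ENNReal.ofReal (c (p i) - δ) := by
      have h1 : S - N * δ = ∑ i, (c (p i) - δ) := by
        rw [Finset.sum_sub_distrib, Finset.sum_const, Finset.card_univ, Fintype.card_fin,
          nsmul_eq_mul, hS]
      rw [h1]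
      exact ofReal_sum_le _ _
    rw [hL]
    refine lt_of_lt_of_le ?_ hR
    have h0 : 0 < S - N * δ := lt_of_le_of_lt (by positivity) harith
    exact (ENNReal.ofReal_lt_ofReal_iff h0).2 harith
  have hηfin : transportCost c η ≠ ⊤ := by
    refine ne_top_of_le_ne_top hfin.ne ?_
    rw [hsplit]
    exact le_add_self
  have hsubfin : transportCost c (γ - η) ≠ ⊤ := by
    refine ne_top_of_le_ne_top hfin.ne ?_
    rw [hsplit]
    exact le_self_add
  have hζη : transportCost c ζ < transportCost c η := by
    refine lt_of_le_of_lt hζcost (lt_of_lt_of_le ?_ hηcost)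
    exact ENNReal.mul_right_strictMono hr0 hrtop hsum_lt
  have hγ'cost : transportCost c γ' < transportCost c γ := by
    have h1 : transportCost c γ' = transportCost c (γ - η) + transportCost c ζ :=
      lintegral_add_measure _ _ _
    rw [h1, hsplit]
    exact ENNReal.add_lt_add_left hsubfin hζη
  exact absurd (hopt.2 γ' ⟨hfst', hsnd'⟩) (not_le.2 hγ'cost)

/-- If `K` is an optimal transport kernel and `γ₁ = μ₁ ⊙ K`,
`γ₂ = μ₂ ⊙ K` have finite transport cost, then `γ₁` and `γ₂` are `c`-CM compatible:
`supp(γ₁) ∪ supp(γ₂)` is `c`-cyclically monotone. -/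
theorem stmt5 {X Y : Type*}
    [MeasurableSpace X] [TopologicalSpace X] [PolishSpace X] [BorelSpace X]
    [MeasurableSpace Y] [TopologicalSpace Y] [PolishSpace Y] [BorelSpace Y]
    (c : X × Y → ℝ) (hc_cont : Continuous c) (hc_nonneg : ∀ p, 0 ≤ c p)
    (K : Kernel X Y) [IsMarkovKernel K] (hK : IsOptimalTransportKernel c K)
    (μ₁ μ₂ : Measure X) [IsProbabilityMeasure μ₁] [IsProbabilityMeasure μ₂]
    (h₁ : transportCost c (μ₁ ⊗ₘ K) < ⊤) (h₂ : transportCost c (μ₂ ⊗ₘ K) < ⊤) :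
    IsCCM c (mSupport (μ₁ ⊗ₘ K) ∪ mSupport (μ₂ ⊗ₘ K)) := by
  set μ : Measure X := (2 : ℝ≥0∞)⁻¹ • (μ₁ + μ₂) with hμ
  haveI : IsProbabilityMeasure μ := by
    constructor
    rw [hμ, Measure.smul_apply, Measure.add_apply, measure_univ, measure_univ,
      smul_eq_mul]
    norm_num
    rw [ENNReal.inv_mul_cancel] <;> norm_num
  have hcomp : μ ⊗ₘ K = (2 : ℝ≥0∞)⁻¹ • (μ₁ ⊗ₘ K) + (2 : ℝ≥0∞)⁻¹ • (μ₂ ⊗ₘ K) := by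
    rw [hμ, Measure.compProd_smul_left, Measure.compProd_add_left, smul_add]
  have hcost : transportCost c (μ ⊗ₘ K) < ⊤ := by
    rw [hcomp]
    simp only [transportCost, lintegral_add_measure, lintegral_smul_measure]
    exact ENNReal.add_lt_top.2
      ⟨ENNReal.mul_lt_top (by norm_num) h₁, ENNReal.mul_lt_top (by norm_num) h₂⟩
  have hopt := hK μ inferInstance hcost
  have hccm := optimal_support_isCCM c hc_cont hc_nonneg (μ ⊗ₘ K) hopt hcost
  intro N σ p hp
  refine hccm N σ p fun i => ?_
  intro Uo hUo hz
  have happly : (μ ⊗ₘ K) Uo =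
      (2 : ℝ≥0∞)⁻¹ * (μ₁ ⊗ₘ K) Uo + (2 : ℝ≥0∞)⁻¹ * (μ₂ ⊗ₘ K) Uo := by
    rw [hcomp]; simp [Measure.add_apply, Measure.smul_apply]
  rcases hp i with h | h
  · have h1 := h Uo hUo hz
    rw [happly]
    intro h0
    rcases add_eq_zero.mp h0 with ⟨ha, _⟩
    rcases mul_eq_zero.mp ha with hc | hc
    · norm_num at hc
    · exact h1 hc
  · have h1 := h Uo hUo hz
    rw [happly]
    intro h0
    rcases add_eq_zero.mp h0 with ⟨_, hb⟩
    rcases mul_eq_zero.mp hb with hc | hc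
    · norm_num at hc
    · exact h1 hc
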